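/- Let r ≥ 1 and N ≥ r. For any sequences (a_k), the quantity D(t) = Σ_{k=r}^N a_k φ_k^{(r)}(t), obtained from r-fold application of the Legendre differentiation formula, can be rewritten as D(t) = 2^r Σ*_{l=0}^{N−r} sqrt(l+1/2) φ_l(t) · Σ_{k=l+r}^{N} sqrt(k+1/2) a_k B_k^r, where B_k^r is the r-fold iterated parity-restricted sum of weights (l_j + 1/2) and B_k^1 = 1. In particular, the Legendre coefficient of φ_l in Σ_{k=r}^N a_k φ_k^{(r)} is 2^r sqrt(l+1/2) Σ_{k=l+r, k+l+r even}^N sqrt(k+1/2) a_k B_k^r. -/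

import Mathlib

open Polynomial


open MeasureTheory Set ENNReal

/-- Orthonormal Legendre polynomial `φ_k(t) = √(k+1/2)·(2^k k!)⁻¹·dᵏ/dtᵏ[(t²-1)^k]`. -/
noncomputable def phi (k : ℕ) : ℝ → ℝ := fun t =>
  Real.sqrt ((k : ℝ) + 1/2) * ((2:ℝ)^k * (Nat.factorial k : ℝ))⁻¹ *
    iteratedDeriv k (fun s => (s^2 - 1)^k) t

/-- Fourier–Legendre coefficient `⟨f, φ_k⟩`. -/
noncomputable def coef (f : ℝ → ℝ) (k : ℕ) : ℝ := ∫ t in (-1:ℝ)..1, f t * phi k t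

/-- Summand of the weighted Wiener norm. -/
noncomputable def wSeq (s μ : ℝ) (f : ℝ → ℝ) (k : ℕ) : ℝ :=
  (max 1 (k:ℝ)) ^ (s * μ) * |coef f k| ^ s

/-- Weighted Wiener norm `‖f‖_{s,μ}`. -/
noncomputable def wNorm (s μ : ℝ) (f : ℝ → ℝ) : ℝ := (∑' k, wSeq s μ f k) ^ (1/s)

/-- Truncation method `D_N^{(r)}` applied to a coefficient sequence `a`. -/
noncomputable def DN (a : ℕ → ℝ) (r N : ℕ) (t : ℝ) : ℝ :=
  ∑ k ∈ Finset.Icc r N, a k * iteratedDeriv r (phi k) t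

/-- Lebesgue measure restricted to `[-1,1]`. -/
noncomputable def restr : Measure ℝ := volume.restrict (Set.Icc (-1) 1)

/-- Iterated parity-restricted sum `B_k^r` with base index `l`:
`B_k^1 = 1` and `B_k^{m+2} = Σ*_{j = l+m+1}^{k-1} (j+1/2) · B_j^{m+1}`,
where the star restricts to `j` with `j + k` odd. -/
noncomputable def B (l : ℕ) : ℕ → ℕ → ℝ
  | 0, _ => 1
  | 1, _ => 1
  | (m+2), k =>
      ∑ j ∈ (Finset.Icc (l + m + 1) (k - 1)).filter (fun j => Odd (j + k)),
        ((j : ℝ) + 1/2) * B l (m+1) j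

section Aux

lemma iter_deriv_X_mul (m : ℕ) (p : Polynomial ℝ) :
    derivative^[m+1] (X * p) = X * derivative^[m+1] p + (m+1 : ℝ) • derivative^[m] p := by
  induction m generalizing p with
  | zero => simp [derivative_mul]; module
  | succ m ih =>
      rw [Function.iterate_succ_apply, derivative_mul, derivative_X, one_mul]
      rw [show derivative^[m+1] (p + X * derivative p)
          = derivative^[m+1] p + derivative^[m+1] (X * derivative p) by simp]
      rw [ih (derivative p)]
      rw [show derivative^[m+1+1] p = derivative^[m+1] (derivative p) from
        Function.iterate_succ_apply _ _ _,
        show derivative^[m+1] p = derivative^[m] (derivative p) from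
        Function.iterate_succ_apply _ _ _]
      push_cast
      module

lemma iter_deriv_add (k : ℕ) (p q : Polynomial ℝ) :
    derivative^[k] (p + q) = derivative^[k] p + derivative^[k] q := by
  induction k generalizing p q with
  | zero => rfl
  | succ k ih => simp [Function.iterate_succ_apply, derivative_add, ih]

noncomputable def uu (n : ℕ) : Polynomial ℝ := (X^2 - 1)^n
noncomputable def qq (n : ℕ) : Polynomial ℝ := derivative^[n] (uu n)

lemma du (n : ℕ) : derivative (uu (n+1)) = C (2*(n+1) : ℝ) * (X * uu n) := by
  simp [uu, derivative_pow]
  ring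

lemma lemA (n : ℕ) : derivative (qq (n+1))
    = C (2*(n+1) : ℝ) * (X * derivative (qq n) + C ((n:ℝ)+1) * qq n) := by
  have h1 : derivative (qq (n+1)) = derivative^[n+1] (derivative (uu (n+1))) := by
    rw [qq]
    calc derivative (derivative^[n+1] (uu (n+1)))
        = derivative^[n+1+1] (uu (n+1)) := (Function.iterate_succ_apply' _ _ _).symm
      _ = derivative^[n+1] (derivative (uu (n+1))) := Function.iterate_succ_apply _ _ _
  rw [h1, du, iterate_derivative_C_mul, iter_deriv_X_mul]
  have h2 : derivative^[n+1] (uu n) = derivative (qq n) :=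
    (Function.iterate_succ_apply' _ _ _)
  rw [h2, qq]
  rw [smul_eq_C_mul]

lemma lemB (n : ℕ) : X * derivative (qq (n+1))
    = C ((n:ℝ)+1) * qq (n+1) + C (2*(n+1) : ℝ) * derivative^[n+1] (uu n) := by
  have key : X * derivative (uu (n+1)) = C (2*(n+1) : ℝ) * uu (n+1) + C (2*(n+1) : ℝ) * uu n := by
    rw [du]
    have : uu (n+1) = (X^2-1) * uu n := by rw [uu, uu, pow_succ]; ring
    rw [this]; ring
  have happ := congrArg (fun p => derivative^[n+1] p) key
  rw [iter_deriv_X_mul] at happ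
  have e1 : derivative^[n+1] (derivative (uu (n+1))) = derivative (qq (n+1)) := by
    rw [qq]
    calc derivative^[n+1] (derivative (uu (n+1)))
        = derivative^[n+1+1] (uu (n+1)) := (Function.iterate_succ_apply _ _ _).symm
      _ = derivative (derivative^[n+1] (uu (n+1))) := Function.iterate_succ_apply' _ _ _
  have e2 : derivative^[n] (derivative (uu (n+1))) = qq (n+1) := by
    rw [qq, Function.iterate_succ_apply]
  have hadd : derivative^[n+1] (C (2*(n+1):ℝ) * uu (n+1) + C (2*(n+1):ℝ) * uu n)
      = C (2*(n+1):ℝ) * derivative^[n+1] (uu (n+1)) + C (2*(n+1):ℝ) * derivative^[n+1] (uu n) := by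
    rw [iter_deriv_add, iterate_derivative_C_mul, iterate_derivative_C_mul]
  rw [hadd, e1, e2, ← qq] at happ
  have := happ
  rw [smul_eq_C_mul] at this
  have hC : (C (2*(n+1):ℝ)) = C ((n:ℝ)+1) + C ((n:ℝ)+1) := by rw [← C_add]; ring_nf
  rw [hC] at this ⊢
  push_cast at this ⊢
  linear_combination this

noncomputable def Pl (n : ℕ) : Polynomial ℝ := C (((2:ℝ)^n * (Nat.factorial n : ℝ))⁻¹) * qq n

lemma Pl_zero : Pl 0 = 1 := by simp [Pl, qq, uu]
lemma Pl_one : Pl 1 = X := by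
  simp [Pl, qq, uu, Nat.factorial]
  rw [← mul_assoc, show (C (2:ℝ)⁻¹ * (1 + 1) : Polynomial ℝ) = 1 by rw [← C_1, ← C_add, ← C_mul]; norm_num]
  norm_num

lemma rec3 (n : ℕ) : derivative (Pl (n+2))
    = C (2*(n:ℝ)+3) * Pl (n+1) + derivative (Pl n) := by
  have hA := lemA (n+1)
  have hB := lemB n
  have e3 : derivative^[n+1] (uu n) = derivative (qq n) :=
    (Function.iterate_succ_apply' _ _ _)
  rw [hB, e3] at hA
  have c2 : ((2:ℝ)^(n+2) * (Nat.factorial (n+2) : ℝ)) ≠ 0 := by positivity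
  have c1 : ((2:ℝ)^(n+1) * (Nat.factorial (n+1) : ℝ)) ≠ 0 := by positivity
  have c0 : ((2:ℝ)^n * (Nat.factorial n : ℝ)) ≠ 0 := by positivity
  have hfac2 : (Nat.factorial (n+2) : ℝ) = ((n:ℝ)+2) * ((n:ℝ)+1) * (Nat.factorial n : ℝ) := by
    rw [Nat.factorial_succ, Nat.factorial_succ]; push_cast; ring
  have hfac1 : (Nat.factorial (n+1) : ℝ) = ((n:ℝ)+1) * (Nat.factorial n : ℝ) := by
    rw [Nat.factorial_succ]; push_cast; ring
  rw [Pl, Pl, Pl, derivative_C_mul, derivative_C_mul, hA]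
  simp only [← smul_eq_C_mul]
  match_scalars
  · rw [hfac2, hfac1] at *
    push_cast at *
    field_simp
    ring
  · rw [hfac2] at *
    push_cast at *
    field_simp
    ring

lemma Pl_deriv_sum (k : ℕ) : derivative (Pl k)
    = ∑ l ∈ (Finset.range k).filter (fun l => Odd (l + k)), C (2*(l:ℝ)+1) * Pl l := by
  induction k using Nat.twoStepInduction with
  | zero => simp [Pl_zero]
  | one =>
      rw [Pl_one]
      rw [show (Finset.range 1).filter (fun l => Odd (l + 1)) = {0} by decide]
      simp [Pl_zero]
  | more n ih _ =>
      have hpar : ∀ l, Odd (l + (n+2)) ↔ Odd (l + n) := by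
        intro l; constructor
        · rintro ⟨m, hm⟩; exact ⟨m-1, by omega⟩
        · rintro ⟨m, hm⟩; exact ⟨m+1, by omega⟩
      have hset : (Finset.range (n+2)).filter (fun l => Odd (l + (n+2)))
          = insert (n+1) ((Finset.range n).filter (fun l => Odd (l + n))) := by
        rw [Finset.filter_congr (fun l _ => by rw [hpar l] : ∀ l ∈ Finset.range (n+2),
          Odd (l + (n+2)) ↔ Odd (l + n))]
        rw [Finset.range_add_one, Finset.filter_insert, if_pos ⟨n, by omega⟩,
          Finset.range_add_one, Finset.filter_insert, if_neg (Nat.not_odd_iff_even.mpr ⟨n, rfl⟩)]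
      rw [hset, Finset.sum_insert (by simp), rec3, ih]
      push_cast
      ring_nf

noncomputable def sq2 (k : ℕ) : ℝ := Real.sqrt ((k:ℝ) + 1/2)

lemma sq_sq (k : ℕ) : sq2 k * sq2 k = (k:ℝ) + 1/2 :=
  Real.mul_self_sqrt (by positivity)

noncomputable def pphi (k : ℕ) : Polynomial ℝ := C (sq2 k) * Pl k

lemma iter_deriv_sum {ι : Type*} (m : ℕ) (s : Finset ι) (f : ι → Polynomial ℝ) :
    derivative^[m] (∑ i ∈ s, f i) = ∑ i ∈ s, derivative^[m] (f i) := by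
  induction m with
  | zero => rfl
  | succ m ih =>
      rw [Function.iterate_succ_apply', ih, derivative_sum]
      simp [Function.iterate_succ_apply']

lemma d_pphi (k : ℕ) : derivative (pphi k)
    = ∑ j ∈ (Finset.range k).filter (fun j => Odd (j + k)),
        C (2 * sq2 k * sq2 j) * pphi j := by
  rw [pphi, derivative_C_mul, Pl_deriv_sum, Finset.mul_sum]
  apply Finset.sum_congr rfl
  intro j _
  rw [pphi, ← mul_assoc, ← C_mul, ← mul_assoc, ← C_mul]
  congr 2
  linear_combination (-2 * sq2 k) * sq_sq j

-- degree bound and vanishing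
lemma natDegree_qq (j : ℕ) : (qq j).natDegree ≤ j := by
  have h1 : (uu j).natDegree ≤ 2 * j := by
    calc (uu j).natDegree ≤ j * (X^2 - (1:Polynomial ℝ)).natDegree := natDegree_pow_le
    _ ≤ j * 2 := by
        gcongr
        exact (natDegree_sub_le _ _).trans (by simp)
    _ = 2 * j := by ring
  calc (qq j).natDegree ≤ (uu j).natDegree - j := natDegree_iterate_derivative _ _
  _ ≤ 2 * j - j := by omega
  _ = j := by omega

lemma vanish {j m : ℕ} (h : j < m) : derivative^[m] (pphi j) = 0 := by
  rw [pphi, Pl]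
  rw [iterate_derivative_C_mul, iterate_derivative_C_mul,
    iterate_derivative_eq_zero (lt_of_le_of_lt (natDegree_qq j) h)]
  simp

lemma sum_swap_filter {M : Type*} [AddCommMonoid M] (s t : Finset ℕ) (P : ℕ → ℕ → Prop)
    [∀ k j, Decidable (P k j)] (f : ℕ → ℕ → M) :
    ∑ k ∈ s, ∑ j ∈ t.filter (fun j => P k j), f k j
      = ∑ j ∈ t, ∑ k ∈ s.filter (fun k => P k j), f k j := by
  simp_rw [Finset.sum_filter]
  exact Finset.sum_comm

lemma filter_push {M : Type*} [AddCommMonoid M] (s t : Finset ℕ) (Q : ℕ → Prop)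
    (R : ℕ → ℕ → Prop) [DecidablePred Q] [∀ j k, Decidable (R j k)] (f : ℕ → ℕ → M) :
    ∑ j ∈ s.filter Q, ∑ k ∈ t.filter (fun k => R j k), f j k
      = ∑ j ∈ s, ∑ k ∈ t.filter (fun k => Q j ∧ R j k), f j k := by
  rw [Finset.sum_filter]
  apply Finset.sum_congr rfl
  intro j _
  by_cases h : Q j
  · simp [h]
  · simp [h]


lemma B_one (l k : ℕ) : B l 1 k = 1 := rfl

lemma B_succ (l m k : ℕ) : B l (m+2) k
    = ∑ j ∈ (Finset.Icc (l + m + 1) (k - 1)).filter (fun j => Odd (j + k)),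
        ((j : ℝ) + 1/2) * B l (m+1) j := rfl

lemma B_zero_of_le (l m k : ℕ) (h : k ≤ l + m + 1) : B l (m+2) k = 0 := by
  rw [B_succ, Finset.Icc_eq_empty (by omega : ¬ l + m + 1 ≤ k - 1)]
  simp

lemma expand_once (m N : ℕ) (a : ℕ → ℝ) :
    ∑ k ∈ Finset.Icc (m+1) N, C (a k) * derivative^[m+1] (pphi k)
    = ∑ j ∈ Finset.range N,
        C (∑ k ∈ (Finset.Icc (m+1) N).filter (fun k => j < k ∧ Odd (j + k)),
             a k * (2 * sq2 k * sq2 j)) * derivative^[m] (pphi j) := by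
  have h1 : ∀ k ∈ Finset.Icc (m+1) N, C (a k) * derivative^[m+1] (pphi k)
      = ∑ j ∈ (Finset.range N).filter (fun j => j < k ∧ Odd (j + k)),
          C (a k * (2 * sq2 k * sq2 j)) * derivative^[m] (pphi j) := by
    intro k hk
    rw [Finset.mem_Icc] at hk
    have hset : (Finset.range k).filter (fun j => Odd (j + k))
        = (Finset.range N).filter (fun j => j < k ∧ Odd (j + k)) := by
      ext j
      simp only [Finset.mem_filter, Finset.mem_range]
      constructor
      · exact fun ⟨h1, h2⟩ => ⟨by omega, h1, h2⟩
      · exact fun ⟨h1, h2, h3⟩ => ⟨h2, h3⟩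
    rw [Function.iterate_succ_apply, d_pphi, hset, iter_deriv_sum, Finset.mul_sum]
    apply Finset.sum_congr rfl
    intro j _
    rw [iterate_derivative_C_mul, ← mul_assoc, ← C_mul]
  rw [Finset.sum_congr rfl h1, sum_swap_filter]
  apply Finset.sum_congr rfl
  intro j _
  rw [← Finset.sum_mul, ← map_sum]

theorem key : ∀ r : ℕ, 1 ≤ r → ∀ N : ℕ, r ≤ N → ∀ a : ℕ → ℝ,
    ∑ k ∈ Finset.Icc r N, C (a k) * derivative^[r] (pphi k)
    = ∑ l ∈ Finset.range (N - r + 1),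
        C ((2:ℝ)^r * sq2 l *
          (∑ k ∈ (Finset.Icc (l + r) N).filter (fun k => Even (k + l + r)),
            sq2 k * a k * B l r k)) * pphi l := by
  intro r hr
  induction r, hr using Nat.le_induction with
  | base =>
      intro N hN a
      conv_lhs => rw [show (1:ℕ) = 0 + 1 from rfl]
      rw [expand_once 0 N a]
      simp only [Function.iterate_zero_apply, Nat.zero_add]
      rw [show N - 1 + 1 = N by omega]
      apply Finset.sum_congr rfl
      intro l hl
      congr 2
      have hset : (Finset.Icc 1 N).filter (fun k => l < k ∧ Odd (l + k))
          = (Finset.Icc (l + 1) N).filter (fun k => Even (k + l + 1)) := by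
        ext k
        simp only [Finset.mem_filter, Finset.mem_Icc, Nat.even_iff, Nat.odd_iff]
        omega
      rw [hset, Finset.mul_sum]
      apply Finset.sum_congr rfl
      intro k _
      rw [B_one]
      ring
  | succ r hr ih =>
      intro N hN a
      obtain ⟨m, rfl⟩ : ∃ m, r = m + 1 := ⟨r - 1, by omega⟩
      set r := m + 1 with hrdef
      rw [expand_once r N a]
      have hsub : Finset.Icc r (N - 1) ⊆ Finset.range N := by
        intro x hx
        rw [Finset.mem_Icc] at hx
        rw [Finset.mem_range]
        omega
      have hzero : ∀ x ∈ Finset.range N, x ∉ Finset.Icc r (N - 1) →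
          C (∑ k ∈ (Finset.Icc (r+1) N).filter (fun k => x < k ∧ Odd (x + k)),
               a k * (2 * sq2 k * sq2 x)) * derivative^[r] (pphi x) = 0 := by
        intro x hx hnx
        rw [Finset.mem_range] at hx
        rw [Finset.mem_Icc] at hnx
        rw [vanish (by omega : x < r), mul_zero]
      rw [← Finset.sum_subset hsub hzero]
      have ihb := ih (N - 1) (by omega)
        (fun j => ∑ k ∈ (Finset.Icc (r+1) N).filter (fun k => j < k ∧ Odd (j + k)),
             a k * (2 * sq2 k * sq2 j))
      rw [ihb, show N - 1 - r + 1 = N - (r+1) + 1 by omega]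
      apply Finset.sum_congr rfl
      intro l hl
      rw [Finset.mem_range] at hl
      congr 2
      -- coefficient identity
      have step1 :
          ∑ j ∈ (Finset.Icc (l + r) (N-1)).filter (fun j => Even (j + l + r)),
            sq2 j * (∑ k ∈ (Finset.Icc (r+1) N).filter (fun k => j < k ∧ Odd (j + k)),
               a k * (2 * sq2 k * sq2 j)) * B l r j
          = ∑ j ∈ Finset.Icc (l + r) (N-1),
              ∑ k ∈ (Finset.Icc (r+1) N).filter
                  (fun k => Even (j + l + r) ∧ (j < k ∧ Odd (j + k))),
                2 * ((j:ℝ) + 1/2) * B l r j * (sq2 k * a k) := by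
        rw [← filter_push]
        apply Finset.sum_congr rfl
        intro j _
        rw [Finset.mul_sum, Finset.sum_mul]
        apply Finset.sum_congr rfl
        intro k _
        linear_combination (2 * a k * sq2 k * B l r j) * sq_sq j
      rw [step1, sum_swap_filter]
      have step2 : ∀ k ∈ Finset.Icc (r+1) N,
          (∑ j ∈ (Finset.Icc (l + r) (N-1)).filter
              (fun j => Even (j + l + r) ∧ (j < k ∧ Odd (j + k))),
            2 * ((j:ℝ) + 1/2) * B l r j * (sq2 k * a k))
          = (if Even (k + l + (r+1)) then 2 * sq2 k * a k * B l (r+1) k else 0) := by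
        intro k hk
        rw [Finset.mem_Icc] at hk
        by_cases hE : Even (k + l + (r+1))
        · rw [if_pos hE]
          have hset : (Finset.Icc (l + r) (N-1)).filter
                (fun j => Even (j + l + r) ∧ (j < k ∧ Odd (j + k)))
              = (Finset.Icc (l + m + 1) (k - 1)).filter (fun j => Odd (j + k)) := by
            rw [Nat.even_iff] at hE
            ext j
            simp only [Finset.mem_filter, Finset.mem_Icc, Nat.even_iff, Nat.odd_iff, hrdef]
            omega
          rw [hset, show B l (r+1) k = B l (m+2) k from rfl, B_succ]
          rw [Finset.mul_sum]
          apply Finset.sum_congr rfl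
          intro j _
          rw [show B l (m+1) j = B l r j from rfl]
          ring
        · rw [if_neg hE]
          have hset : (Finset.Icc (l + r) (N-1)).filter
                (fun j => Even (j + l + r) ∧ (j < k ∧ Odd (j + k))) = ∅ := by
            rw [Nat.even_iff] at hE
            rw [Finset.filter_eq_empty_iff]
            intro j hj
            simp only [Nat.even_iff, Nat.odd_iff]
            omega
          rw [hset, Finset.sum_empty]
      rw [Finset.sum_congr rfl step2, ← Finset.sum_filter]
      have hsub2 : (Finset.Icc (l + (r+1)) N).filter (fun k => Even (k + l + (r+1)))
          ⊆ (Finset.Icc (r+1) N).filter (fun k => Even (k + l + (r+1))) := by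
        intro x hx
        simp only [Finset.mem_filter, Finset.mem_Icc, Nat.even_iff] at hx ⊢
        omega
      have hzero2 : ∀ x ∈ (Finset.Icc (r+1) N).filter (fun k => Even (k + l + (r+1))),
          x ∉ (Finset.Icc (l + (r+1)) N).filter (fun k => Even (k + l + (r+1))) →
          2 * sq2 x * a x * B l (r+1) x = 0 := by
        intro x hx hnx
        simp only [Finset.mem_filter, Finset.mem_Icc, Nat.even_iff] at hx hnx
        have hxle : x ≤ l + m + 1 := by omega
        rw [show B l (r+1) x = B l (m+2) x from rfl, B_zero_of_le l m x hxle, mul_zero]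
      rw [← Finset.sum_subset hsub2 hzero2]
      rw [Finset.mul_sum, Finset.mul_sum]
      apply Finset.sum_congr rfl
      intro k _
      ring


lemma iteratedDeriv_eval (r : ℕ) (p : Polynomial ℝ) :
    iteratedDeriv r (fun t => p.eval t) = fun t => (derivative^[r] p).eval t := by
  induction r generalizing p with
  | zero => simp
  | succ r ihp =>
      rw [iteratedDeriv_succ']
      have h : (deriv fun t : ℝ => p.eval t) = fun t => (derivative p).eval t := by
        funext s
        simp [Polynomial.deriv]
      rw [h, ihp, Function.iterate_succ_apply]

lemma phi_eq (k : ℕ) : phi k = fun t => (pphi k).eval t := by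
  funext t
  rw [phi, pphi, Pl]
  have hfun : (fun s : ℝ => (s^2 - 1)^k) = fun s => (((X:Polynomial ℝ)^2 - 1)^k).eval s := by
    funext s; simp
  rw [hfun, iteratedDeriv_eval]
  simp [qq, uu, sq2]
  ring

lemma itd_phi (r k : ℕ) : iteratedDeriv r (phi k) = fun t => (derivative^[r] (pphi k)).eval t := by
  rw [phi_eq, iteratedDeriv_eval]


end Aux

/-- rearrangement identity.  For any coefficients `a`,
`Σ_{k=r}^N a_k φ_k^{(r)}(t)
  = Σ_{l=0}^{N-r} 2^r √(l+1/2) (Σ_{k=l+r, k+l+r even}^N √(k+1/2) a_k B_k^r) φ_l(t)`. -/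
theorem stmt_15 (r : ℕ) (hr : 1 ≤ r) (N : ℕ) (hN : r ≤ N) (a : ℕ → ℝ) (t : ℝ) :
    DN a r N t =
      ∑ l ∈ Finset.range (N - r + 1),
        (2 : ℝ) ^ r * Real.sqrt ((l : ℝ) + 1/2) *
          (∑ k ∈ (Finset.Icc (l + r) N).filter (fun k => Even (k + l + r)),
            Real.sqrt ((k : ℝ) + 1/2) * a k * B l r k) * phi l t := by
  have hkey := congrArg (fun p => Polynomial.eval t p) (key r hr N hN a)
  simp only [Polynomial.eval_finset_sum, Polynomial.eval_mul, Polynomial.eval_C] at hkey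
  unfold DN
  simp only [itd_phi]
  simp only [phi_eq]
  simp only [sq2] at hkey
  exact hkey
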